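/- Let φ : H → G be a surjective homomorphism of finite groups. (i) The inflation along φ of a permutation G-lattice is a permutation H-lattice. (ii) The inflation along φ of a flabby G-lattice is a flabby H-lattice. (iii) Consequently, if 0 → M → P → F → 0 is a flabby resolution of a G-lattice M, then its inflation along φ is a flabby resolution of the H-lattice obtained from M by inflation. -/

import Mathlib

/- In this file, a `G`-lattice is encoded as a `Representation ℤ G M` on a ℤ-module `M`
which is finite and free over `ℤ` (typeclass assumptions `Module.Free ℤ M`,
`Module.Finite ℤ M`). -/

attribute [instance 2000] Prod.instModule Pi.module

/-- The direct sum of two representations of a group `G` over `R`. -/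
def prodRep {R G M N : Type} [CommRing R] [Group G]
    [AddCommGroup M] [Module R M] [AddCommGroup N] [Module R N]
    (ρ : Representation R G M) (τ : Representation R G N) :
    Representation R G (M × N) where
  toFun g := LinearMap.prodMap (ρ g) (τ g)
  map_one' := LinearMap.ext fun x => by simp
  map_mul' g h := LinearMap.ext fun x => by simp

/-- Inflation (or restriction) of a representation along a group homomorphism. -/
def inflRep {R H G M : Type} [CommRing R] [Group H] [Group G]
    [AddCommGroup M] [Module R M]
    (ρ : Representation R G M) (φ : H →* G) : Representation R H M :=
  MonoidHom.comp ρ φ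

/-- A permutation lattice: the module has a finite basis permuted by the group action. -/
def IsPermutationRep {R G M : Type} [CommRing R] [Group G] [AddCommGroup M] [Module R M]
    (ρ : Representation R G M) : Prop :=
  ∃ (ι : Type) (_ : Fintype ι) (b : Module.Basis ι R M),
    ∀ (g : G) (i : ι), ∃ j : ι, ρ g (b i) = b j

/-- An equivariant isomorphism between two representations. -/
def RepIso {R G M N : Type} [CommRing R] [Group G] [AddCommGroup M] [Module R M]
    [AddCommGroup N] [Module R N]
    (ρ : Representation R G M) (τ : Representation R G N) : Prop :=
  ∃ e : M ≃ₗ[R] N, ∀ (g : G) (m : M), e (ρ g m) = τ g (e m)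

/-- Flabbiness: the Tate cohomology group `Ĥ⁻¹(H, M)` vanishes for every subgroup `H ≤ G`,
i.e. every element of `M` killed by the norm element of `H` lies in the subgroup
generated by the elements `h • m' - m'` (`h ∈ H`, `m' ∈ M`). -/
def IsFlabbyRep {G M : Type} [Group G] [AddCommGroup M] [Module ℤ M]
    (ρ : Representation ℤ G M) : Prop :=
  ∀ (H : Subgroup G) (m : M),
    (∑ᶠ h : H, ρ (h : G) m) = 0 →
      m ∈ AddSubgroup.closure {x : M | ∃ (h : H) (m' : M), x = ρ ((h : G)) m' - m'}

/-- Coflabbiness: `H¹(H, M) = 0` for every subgroup `H ≤ G`, i.e. every `1`-cocycle on `H`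
with values in `M` is a coboundary. -/
def IsCoflabbyRep {G M : Type} [Group G] [AddCommGroup M] [Module ℤ M]
    (ρ : Representation ℤ G M) : Prop :=
  ∀ (H : Subgroup G) (f : H → M),
    (∀ h₁ h₂ : H, f (h₁ * h₂) = ρ ((h₁ : G)) (f h₂) + f h₁) →
    ∃ m : M, ∀ x : H, f x = ρ ((x : G)) m - m

/-- Stably permutation: the lattice becomes permutation after adding a permutation lattice. -/
def IsStablyPermutationRep {G M : Type} [Group G] [AddCommGroup M] [Module ℤ M]
    (ρ : Representation ℤ G M) : Prop :=
  ∃ (Q : Type) (_ : AddCommGroup Q) (_ : Module ℤ Q) (σ : Representation ℤ G Q)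
    (Q' : Type) (_ : AddCommGroup Q') (_ : Module ℤ Q') (σ' : Representation ℤ G Q'),
    IsPermutationRep σ ∧ IsPermutationRep σ' ∧ RepIso (prodRep ρ σ) σ'

/-- Invertible: the lattice is a direct summand of a permutation lattice. -/
def IsInvertibleRep {G M : Type} [Group G] [AddCommGroup M] [Module ℤ M]
    (ρ : Representation ℤ G M) : Prop :=
  ∃ (N : Type) (_ : AddCommGroup N) (_ : Module ℤ N) (τ : Representation ℤ G N),
    IsPermutationRep (prodRep ρ τ)

/-- Similarity of lattices: they become isomorphic after adding permutation lattices. -/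
def SimilarRep {G M N : Type} [Group G] [AddCommGroup M] [Module ℤ M]
    [AddCommGroup N] [Module ℤ N]
    (ρ : Representation ℤ G M) (τ : Representation ℤ G N) : Prop :=
  ∃ (Q : Type) (_ : AddCommGroup Q) (_ : Module ℤ Q) (σ : Representation ℤ G Q)
    (Q' : Type) (_ : AddCommGroup Q') (_ : Module ℤ Q') (σ' : Representation ℤ G Q'),
    IsPermutationRep σ ∧ IsPermutationRep σ' ∧ RepIso (prodRep ρ σ) (prodRep τ σ')

/-- A short exact sequence `0 → M → P → F → 0` of `G`-equivariant `ℤ`-linear maps. -/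
def IsEquivariantExact {G M P F : Type} [Group G] [AddCommGroup M] [Module ℤ M]
    [AddCommGroup P] [Module ℤ P] [AddCommGroup F] [Module ℤ F]
    (ρM : Representation ℤ G M) (ρP : Representation ℤ G P) (ρF : Representation ℤ G F)
    (i : M →ₗ[ℤ] P) (π : P →ₗ[ℤ] F) : Prop :=
  Function.Injective i ∧ Function.Surjective π ∧ LinearMap.range i = LinearMap.ker π ∧
  (∀ (g : G) (m : M), i (ρM g m) = ρP g (i m)) ∧
  (∀ (g : G) (x : P), π (ρP g x) = ρF g (π x))

/-- A flabby resolution `0 → M → P → F → 0`: exact and equivariant, `P` a permutation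
lattice and `F` flabby. -/
def IsFlabbyResolution {G M P F : Type} [Group G] [AddCommGroup M] [Module ℤ M]
    [AddCommGroup P] [Module ℤ P] [AddCommGroup F] [Module ℤ F]
    (ρM : Representation ℤ G M) (ρP : Representation ℤ G P) (ρF : Representation ℤ G F)
    (i : M →ₗ[ℤ] P) (π : P →ₗ[ℤ] F) : Prop :=
  IsEquivariantExact ρM ρP ρF i π ∧ IsPermutationRep ρP ∧ IsFlabbyRep ρF

/-- `F` is a flabby quotient of `M`, i.e. it fits into some flabby resolution of `M`;
it then represents the flabby class `[M]^fl`. -/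
def IsFlabbyQuotient {G M F : Type} [Group G] [AddCommGroup M] [Module ℤ M]
    [AddCommGroup F] [Module ℤ F]
    (ρM : Representation ℤ G M) (ρF : Representation ℤ G F) : Prop :=
  ∃ (P : Type) (_ : AddCommGroup P) (_ : Module ℤ P)
    (ρP : Representation ℤ G P) (i : M →ₗ[ℤ] P) (π : P →ₗ[ℤ] F),
    IsFlabbyResolution ρM ρP ρF i π

/-- First projection of a subgroup of `G × G'` (surjective when the subgroup
is a subdirect product). -/
def projFst {G G' : Type} [Group G] [Group G'] (W : Subgroup (G × G')) : ↥W →* G :=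
  (MonoidHom.fst G G').comp W.subtype

/-- Second projection of a subgroup of `G × G'`. -/
def projSnd {G G' : Type} [Group G] [Group G'] (W : Subgroup (G × G')) : ↥W →* G' :=
  (MonoidHom.snd G G').comp W.subtype

/-- Let `φ : H → G` be a surjective homomorphism of finite groups.
(i) Inflation along `φ` of a permutation `G`-lattice is a permutation `H`-lattice.
(ii) Inflation along `φ` of a flabby `G`-lattice is a flabby `H`-lattice.
(iii) Hence the inflation along `φ` of a flabby resolution `0 → M → P → F → 0` of a
`G`-lattice `M` is a flabby resolution of the inflated `H`-lattice `M`. -/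

lemma nsmul_tf {M : Type} [AddCommGroup M] [Module ℤ M] [Module.Free ℤ M]
    {n : ℕ} (hn : n ≠ 0) {x : M} (h : n • x = 0) : x = 0 := by
  let b := Module.Free.chooseBasis ℤ M
  rw [← (b.repr.map_eq_zero_iff)] at h ⊢
  rw [map_nsmul] at h
  ext i
  have h2 := DFunLike.congr_fun h i
  simp only [Finsupp.smul_apply, Finsupp.coe_zero, Pi.zero_apply, smul_eq_mul,
    nsmul_eq_mul] at h2 ⊢
  rcases mul_eq_zero.mp h2 with h3 | h3
  · exact absurd (by exact_mod_cast h3) hn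
  · exact h3

lemma sum_comp_surj {A B M : Type} [Group A] [Group B] [Finite A]
    [AddCommMonoid M] (ψ : A →* B) (hψ : Function.Surjective ψ) (u : B → M) :
    ∑ᶠ a : A, u (ψ a) = Nat.card ψ.ker • ∑ᶠ b : B, u b := by
  have : Finite B := Finite.of_surjective ψ hψ
  classical
  have : Fintype A := Fintype.ofFinite A
  have : Fintype B := Fintype.ofFinite B
  rw [finsum_eq_sum_of_fintype, finsum_eq_sum_of_fintype,
    ← Fintype.sum_fiberwise ψ (fun a => u (ψ a)), Finset.smul_sum]
  refine Finset.sum_congr rfl fun b _ => ?_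
  obtain ⟨a₀, ha₀⟩ := hψ b
  have e : ψ.ker ≃ {a // ψ a = b} :=
    { toFun := fun k => ⟨k.1 * a₀, by
        have := k.2
        rw [MonoidHom.mem_ker] at this
        simp [this, ha₀]⟩
      invFun := fun a => ⟨a.1 * a₀⁻¹, by
        rw [MonoidHom.mem_ker]
        simp [a.2, ha₀]⟩
      left_inv := fun k => by simp
      right_inv := fun a => by simp }
  calc ∑ a : {a // ψ a = b}, u (ψ a.1) = ∑ _a : {a // ψ a = b}, u b := by
        refine Finset.sum_congr rfl fun a _ => by rw [a.2]
    _ = Fintype.card {a // ψ a = b} • u b := by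
        rw [Finset.sum_const, Finset.card_univ]
    _ = Nat.card ψ.ker • u b := by
        rw [← Fintype.card_congr e, Nat.card_eq_fintype_card]

theorem inflation_of_flabbyResolution
    {H G : Type} [Group H] [Group G] [Finite H] [Finite G]
    (φ : H →* G) (hφ : Function.Surjective φ)
    {M P F : Type}
    [AddCommGroup M] [Module ℤ M] [Module.Free ℤ M] [Module.Finite ℤ M]
    [AddCommGroup P] [Module ℤ P] [Module.Free ℤ P] [Module.Finite ℤ P]
    [AddCommGroup F] [Module ℤ F] [Module.Free ℤ F] [Module.Finite ℤ F]
    (ρM : Representation ℤ G M) (ρP : Representation ℤ G P) (ρF : Representation ℤ G F)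
    (i : M →ₗ[ℤ] P) (π : P →ₗ[ℤ] F) :
    (IsPermutationRep ρP → IsPermutationRep (inflRep ρP φ)) ∧
    (IsFlabbyRep ρF → IsFlabbyRep (inflRep ρF φ)) ∧
    (IsFlabbyResolution ρM ρP ρF i π →
      IsFlabbyResolution (inflRep ρM φ) (inflRep ρP φ) (inflRep ρF φ) i π) := by
  have perm : IsPermutationRep ρP → IsPermutationRep (inflRep ρP φ) := by
    rintro ⟨ι, ft, b, hb⟩
    exact ⟨ι, ft, b, fun h i => hb (φ h) i⟩
  have flab : IsFlabbyRep ρF → IsFlabbyRep (inflRep ρF φ) := by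
    intro hF K m hm
    set K' : Subgroup G := K.map φ with hK'
    set ψ : ↥K →* ↥K' := φ.subgroupMap K with hψdef
    have hψ : Function.Surjective ψ := φ.subgroupMap_surjective K
    set u : ↥K' → F := fun g => ρF (g : G) m with hu
    have hsum : ∑ᶠ h : ↥K, (inflRep ρF φ) ((h : H)) m = ∑ᶠ a : ↥K, u (ψ a) := by
      refine finsum_congr fun a => ?_
      rfl
    rw [hsum, sum_comp_surj ψ hψ u] at hm
    have hker : Nat.card ψ.ker ≠ 0 := Nat.card_pos.ne'
    have hS : ∑ᶠ g : ↥K', ρF (g : G) m = 0 := nsmul_tf hker hm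
    have hmem := hF K' m hS
    have hsets : {x : F | ∃ (g : ↥K') (m' : F), x = ρF ((g : G)) m' - m'} =
        {x : F | ∃ (h : ↥K) (m' : F), x = (inflRep ρF φ) ((h : H)) m' - m'} := by
      ext x
      constructor
      · rintro ⟨⟨g, hg⟩, m', rfl⟩
        obtain ⟨h, hh, rfl⟩ := hg
        exact ⟨⟨h, hh⟩, m', rfl⟩
      · rintro ⟨⟨h, hh⟩, m', rfl⟩
        exact ⟨⟨φ h, ⟨h, hh, rfl⟩⟩, m', rfl⟩
    rwa [hsets] at hmem
  refine ⟨perm, flab, ?_⟩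
  rintro ⟨⟨hinj, hsurj, hrange, heqM, heqF⟩, hperm, hflab⟩
  exact ⟨⟨hinj, hsurj, hrange, fun h m => heqM (φ h) m, fun h x => heqF (φ h) x⟩,
    perm hperm, flab hflab⟩
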